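/- Let α ∈ (1,2) and for each integer n ≥ 0 set a_n = (α+1)^{n/(1-α)} · Γ(α/(α+1)) · Γ(1 + (α+1)n/(α-1)) / ( n! · Γ(α/(α+1) + n/(α-1)) · Γ(1 + n/(α-1)) ). Then the power series Σ_{n=0}^∞ a_n x^n has radius of convergence exactly c_α = (α-1)(α+1)^{α/(1-α)}. -/

import Mathlib

/-- The Taylor coefficients `a_n` of the moment generating function of
`𝒳_α = 𝒜_α^{1/(1-α)}`. -/
noncomputable def mgfCoef (α : ℝ) (n : ℕ) : ℝ :=
  (α+1) ^ ((n:ℝ)/(1-α)) * Real.Gamma (α/(α+1)) * Real.Gamma (1 + (α+1)*(n:ℝ)/(α-1)) /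
    ((n.factorial : ℝ) * Real.Gamma (α/(α+1) + (n:ℝ)/(α-1)) * Real.Gamma (1 + (n:ℝ)/(α-1)))


open Filter Real Topology

/-- The Gamma ratio `Γ(x+c)/(Γ(x) x^c)`. -/
noncomputable def gratio (c x : ℝ) : ℝ := Real.Gamma (x + c) / (Real.Gamma x * x ^ c)

lemma gratio_pos {c x : ℝ} (hx : 0 < x) (hxc : 0 < x + c) : 0 < gratio c x :=
  div_pos (Real.Gamma_pos_of_pos hxc)
    (mul_pos (Real.Gamma_pos_of_pos hx) (Real.rpow_pos_of_pos hx c))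

lemma one_add_div_tendsto (d : ℝ) :
    Tendsto (fun x : ℝ => 1 + d / x) atTop (𝓝 1) := by
  simpa using tendsto_const_nhds.add (tendsto_const_nhds.div_atTop (tendsto_id (α := ℝ)))

lemma wendel_upper {s x : ℝ} (hs0 : 0 ≤ s) (hs1 : s ≤ 1) (hx : 0 < x) :
    Real.Gamma (x + s) ≤ Real.Gamma x * x ^ s := by
  have hΓx : 0 < Real.Gamma x := Real.Gamma_pos_of_pos hx
  have hxs : 0 < x + s := by linarith
  have h := Real.convexOn_log_Gamma.2 (Set.mem_Ioi.2 hx) (Set.mem_Ioi.2 (by linarith : (0:ℝ) < x + 1))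
    (by linarith : (0:ℝ) ≤ 1 - s) hs0 (by ring)
  simp only [smul_eq_mul, Function.comp_apply] at h
  have hpt : (1 - s) * x + s * (x + 1) = x + s := by ring
  rw [hpt, Real.Gamma_add_one hx.ne', Real.log_mul hx.ne' hΓx.ne'] at h
  have hlog : Real.log (Real.Gamma (x + s)) ≤ Real.log (Real.Gamma x * x ^ s) := by
    rw [Real.log_mul hΓx.ne' (Real.rpow_pos_of_pos hx s).ne', Real.log_rpow hx]
    nlinarith [h]
  exact (Real.log_le_log_iff (Real.Gamma_pos_of_pos hxs) (mul_pos hΓx (Real.rpow_pos_of_pos hx s))).1 hlog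

lemma wendel_lower {s x : ℝ} (hs0 : 0 ≤ s) (hs1 : s ≤ 1) (hx : 0 < x) :
    x * Real.Gamma x ≤ Real.Gamma (x + s) * (x + s) ^ (1 - s) := by
  have hxs : 0 < x + s := by linarith
  have hΓxs : 0 < Real.Gamma (x + s) := Real.Gamma_pos_of_pos hxs
  have h := Real.convexOn_log_Gamma.2 (Set.mem_Ioi.2 hxs)
    (Set.mem_Ioi.2 (by linarith : (0:ℝ) < x + s + 1)) hs0 (by linarith : (0:ℝ) ≤ 1 - s) (by ring)
  simp only [smul_eq_mul, Function.comp_apply] at h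
  have hpt : s * (x + s) + (1 - s) * (x + s + 1) = x + 1 := by ring
  rw [hpt, Real.Gamma_add_one hx.ne', Real.Gamma_add_one hxs.ne',
    Real.log_mul hx.ne' (Real.Gamma_pos_of_pos hx).ne',
    Real.log_mul hxs.ne' hΓxs.ne'] at h
  have hlog : Real.log (x * Real.Gamma x) ≤ Real.log (Real.Gamma (x + s) * (x + s) ^ (1 - s)) := by
    rw [Real.log_mul hx.ne' (Real.Gamma_pos_of_pos hx).ne',
      Real.log_mul hΓxs.ne' (Real.rpow_pos_of_pos hxs (1 - s)).ne', Real.log_rpow hxs]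
    nlinarith [h]
  exact (Real.log_le_log_iff (mul_pos hx (Real.Gamma_pos_of_pos hx))
    (mul_pos hΓxs (Real.rpow_pos_of_pos hxs (1 - s)))).1 hlog

lemma wendel_tendsto {s : ℝ} (hs0 : 0 ≤ s) (hs1 : s ≤ 1) :
    Tendsto (fun x : ℝ => gratio s x) atTop (𝓝 1) := by
  have hlow : Tendsto (fun x : ℝ => (x / (x + s)) ^ (1 - s)) atTop (𝓝 1) := by
    have h1 : Tendsto (fun x : ℝ => x / (x + s)) atTop (𝓝 1) := by
      have h2 := (one_add_div_tendsto s).inv₀ one_ne_zero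
      rw [inv_one] at h2
      refine h2.congr' ?_
      filter_upwards [eventually_gt_atTop 0] with x hx
      have hxs : x + s ≠ 0 := by positivity
      field_simp
    simpa using h1.rpow_const (Or.inr (by linarith))
  refine tendsto_of_tendsto_of_tendsto_of_le_of_le' hlow tendsto_const_nhds ?_ ?_
  · filter_upwards [eventually_gt_atTop 0] with x hx
    have hxs : 0 < x + s := by linarith
    have hΓx : 0 < Real.Gamma x := Real.Gamma_pos_of_pos hx
    rw [Real.div_rpow hx.le hxs.le, gratio, div_le_div_iff₀ (Real.rpow_pos_of_pos hxs _)
      (mul_pos hΓx (Real.rpow_pos_of_pos hx s))]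
    calc x ^ (1 - s) * (Real.Gamma x * x ^ s) = x * Real.Gamma x := by
          rw [mul_comm (Real.Gamma x), ← mul_assoc, ← Real.rpow_add hx]
          norm_num
      _ ≤ Real.Gamma (x + s) * (x + s) ^ (1 - s) := wendel_lower hs0 hs1 hx
  · filter_upwards [eventually_gt_atTop 0] with x hx
    exact div_le_one_of_le₀ (wendel_upper hs0 hs1 hx)
      (by positivity)

lemma gratio_tendsto {c : ℝ} (hc : 0 ≤ c) :
    Tendsto (fun x : ℝ => gratio c x) atTop (𝓝 1) := by
  obtain ⟨k, hk⟩ := exists_nat_ge c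
  induction k generalizing c with
  | zero =>
    have hc0 : c = 0 := le_antisymm (by exact_mod_cast hk) hc
    subst hc0
    refine tendsto_const_nhds.congr' ?_
    filter_upwards [eventually_gt_atTop 0] with x hx
    simp [gratio, (Real.Gamma_pos_of_pos hx).ne']
  | succ k ih =>
    by_cases hc1 : c ≤ 1
    · exact wendel_tendsto hc hc1
    · push_neg at hc1
      have ihc := ih (c := c - 1) (by linarith) (by push_cast at hk ⊢; linarith)
      have hmul : Tendsto (fun x : ℝ => gratio (c - 1) x * ((x + (c - 1)) / x)) atTop (𝓝 1) := by
        have h2 : Tendsto (fun x : ℝ => (x + (c - 1)) / x) atTop (𝓝 1) := by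
          refine (one_add_div_tendsto (c - 1)).congr' ?_
          filter_upwards [eventually_gt_atTop 0] with x hx
          field_simp
        simpa using ihc.mul h2
      refine hmul.congr' ?_
      filter_upwards [eventually_gt_atTop 0] with x hx
      have hxc : (0:ℝ) < x + (c - 1) := by linarith
      have hΓx : 0 < Real.Gamma x := Real.Gamma_pos_of_pos hx
      have hG : Real.Gamma (x + c) = (x + (c - 1)) * Real.Gamma (x + (c - 1)) := by
        rw [show x + c = (x + (c - 1)) + 1 by ring, Real.Gamma_add_one hxc.ne']
      have hp : x ^ c = x ^ (c - 1) * x := by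
        nth_rewrite 1 [show c = (c - 1) + 1 by ring]
        rw [Real.rpow_add hx, Real.rpow_one]
      rw [gratio, gratio, hG, hp]
      have h1 : x ^ (c - 1) ≠ 0 := (Real.rpow_pos_of_pos hx _).ne'
      field_simp

section Main

variable {α : ℝ}

lemma mgfCoef_eq (hα1 : 1 < α) (n : ℕ) :
    mgfCoef α n =
      (α+1) ^ (-((α-1)⁻¹*(n:ℝ))) * Real.Gamma (α/(α+1)) *
        Real.Gamma (1 + ((α+1)*(α-1)⁻¹)*(n:ℝ)) /
      ((n.factorial : ℝ) * Real.Gamma (α/(α+1) + (α-1)⁻¹*(n:ℝ)) *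
        Real.Gamma (1 + (α-1)⁻¹*(n:ℝ))) := by
  have h1 : α - 1 ≠ 0 := by linarith
  have h2 : 1 - α ≠ 0 := by intro h; apply h1; linarith
  have e1 : (n:ℝ)/(1-α) = -((α-1)⁻¹*(n:ℝ)) := by field_simp; ring
  have e2 : (α+1)*(n:ℝ)/(α-1) = ((α+1)*(α-1)⁻¹)*(n:ℝ) := by field_simp
  have e3 : (n:ℝ)/(α-1) = (α-1)⁻¹*(n:ℝ) := by field_simp
  rw [mgfCoef, e1, e2, e3]

lemma mgfCoef_pos (hα1 : 1 < α) (n : ℕ) : 0 < mgfCoef α n := by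
  have hα1' : (0:ℝ) < α + 1 := by linarith
  have hb : (0:ℝ) < (α-1)⁻¹ := by
    have : (0:ℝ) < α - 1 := by linarith
    positivity
  have hA : (0:ℝ) < α/(α+1) := by positivity
  rw [mgfCoef_eq hα1 n]
  have hf : (0:ℝ) < (n.factorial : ℝ) := by exact_mod_cast n.factorial_pos
  exact div_pos
    (mul_pos (mul_pos (Real.rpow_pos_of_pos hα1' _) (Real.Gamma_pos_of_pos hA))
      (Real.Gamma_pos_of_pos (by positivity)))
    (mul_pos (mul_pos hf (Real.Gamma_pos_of_pos (by positivity)))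
      (Real.Gamma_pos_of_pos (by positivity)))

lemma mgf_ratio_tendsto (hα1 : 1 < α) :
    Tendsto (fun n : ℕ => mgfCoef α (n+1) / mgfCoef α n) atTop
      (𝓝 (((α-1)*(α+1)^(α/(1-α)))⁻¹)) := by
  have hα0 : (0:ℝ) < α - 1 := by linarith
  have hα1' : (0:ℝ) < α + 1 := by linarith
  set b : ℝ := (α-1)⁻¹ with hb
  have hbpos : 0 < b := by positivity
  set K : ℝ := (α+1) * b with hKdef
  have hKpos : 0 < K := mul_pos hα1' hbpos
  have hK : K = b + b + 1 := by
    rw [hKdef, hb]; field_simp; ring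
  set A : ℝ := α/(α+1) with hA
  have hApos : 0 < A := by rw [hA]; positivity
  have hΓA : 0 < Real.Gamma A := Real.Gamma_pos_of_pos hApos
  -- limits of the pieces
  have hg1 : Tendsto (fun n : ℕ => gratio K (1 + K*(n:ℝ))) atTop (𝓝 1) :=
    (gratio_tendsto hKpos.le).comp
      (tendsto_atTop_add_const_left _ 1 (tendsto_natCast_atTop_atTop.const_mul_atTop hKpos))
  have hg2 : Tendsto (fun n : ℕ => gratio b (A + b*(n:ℝ))) atTop (𝓝 1) :=
    (gratio_tendsto hbpos.le).comp
      (tendsto_atTop_add_const_left _ A (tendsto_natCast_atTop_atTop.const_mul_atTop hbpos))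
  have hg3 : Tendsto (fun n : ℕ => gratio b (1 + b*(n:ℝ))) atTop (𝓝 1) :=
    (gratio_tendsto hbpos.le).comp
      (tendsto_atTop_add_const_left _ 1 (tendsto_natCast_atTop_atTop.const_mul_atTop hbpos))
  have hinv : Tendsto (fun n : ℕ => 1/(n:ℝ)) atTop (𝓝 0) :=
    tendsto_one_div_atTop_nhds_zero_nat
  have hp1 : Tendsto (fun n : ℕ => (K + 1/(n:ℝ)) ^ K) atTop (𝓝 (K ^ K)) := by
    have h := (tendsto_const_nhds (x := K) (f := atTop (α := ℕ))).add hinv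
    rw [add_zero] at h
    exact h.rpow_const (Or.inl hKpos.ne')
  have hp2 : Tendsto (fun n : ℕ => (b + A/(n:ℝ)) ^ b) atTop (𝓝 (b ^ b)) := by
    have h0 : Tendsto (fun n : ℕ => A/(n:ℝ)) atTop (𝓝 0) := by
      have := hinv.const_mul A
      simpa [div_eq_mul_inv] using this
    have h := (tendsto_const_nhds (x := b) (f := atTop (α := ℕ))).add h0
    rw [add_zero] at h
    exact h.rpow_const (Or.inl hbpos.ne')
  have hp3 : Tendsto (fun n : ℕ => (b + 1/(n:ℝ)) ^ b) atTop (𝓝 (b ^ b)) := by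
    have h := (tendsto_const_nhds (x := b) (f := atTop (α := ℕ))).add hinv
    rw [add_zero] at h
    exact h.rpow_const (Or.inl hbpos.ne')
  have hone : Tendsto (fun n : ℕ => 1 + 1/(n:ℝ)) atTop (𝓝 1) := by
    simpa using tendsto_const_nhds.add hinv
  -- the combined limit
  have hFtend : Tendsto (fun n : ℕ =>
      ((α+1)^(-b) * gratio K (1 + K*(n:ℝ)) * (K + 1/(n:ℝ))^K) /
      ((1 + 1/(n:ℝ)) * (gratio b (A + b*(n:ℝ)) * (b + A/(n:ℝ))^b) *
        (gratio b (1 + b*(n:ℝ)) * (b + 1/(n:ℝ))^b))) atTop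
      (𝓝 (((α+1)^(-b) * 1 * K^K) / (1 * (1 * b^b) * (1 * b^b)))) := by
    refine Tendsto.div ((tendsto_const_nhds.mul hg1).mul hp1)
      ((hone.mul (hg2.mul hp2)).mul (hg3.mul hp3)) ?_
    have : (0:ℝ) < b ^ b := Real.rpow_pos_of_pos hbpos b
    positivity
  -- value of the limit
  have hval : ((α+1)^(-b) * 1 * K^K) / (1 * (1 * b^b) * (1 * b^b))
      = ((α-1)*(α+1)^(α/(1-α)))⁻¹ := by
    have hbb : b ^ K = b^b * b^b * b := by
      rw [hK, Real.rpow_add hbpos, Real.rpow_add hbpos, Real.rpow_one]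
    have hKK : K ^ K = (α+1)^K * (b^b * b^b * b) := by
      nth_rewrite 1 [hKdef]
      rw [Real.mul_rpow hα1'.le hbpos.le, hbb]
    have e3 : ((α+1):ℝ)^(α/(1-α)) = ((α+1)^(α*b))⁻¹ := by
      rw [← Real.rpow_neg hα1'.le]
      congr 1
      rw [hb]
      have h2 : (1:ℝ) - α ≠ 0 := by intro h; linarith
      field_simp
      ring
    have hbbne : (b:ℝ)^b ≠ 0 := (Real.rpow_pos_of_pos hbpos b).ne'
    have hcomb : ((α+1):ℝ)^(-b) * (α+1)^K = (α+1)^(α*b) := by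
      rw [← Real.rpow_add hα1']
      congr 1
      rw [hKdef]; ring
    rw [hKK, e3, mul_inv, inv_inv, ← hb]
    rw [show ((α+1):ℝ)^(-b) * 1 * ((α+1)^K * (b^b*b^b*b))
        = ((α+1)^(-b) * (α+1)^K) * ((b^b*b^b) * b) by ring, hcomb]
    field_simp
  rw [← hval]
  refine hFtend.congr' ?_
  filter_upwards [eventually_ge_atTop 1] with n hn
  have hmpos : (0:ℝ) < (n:ℝ) := by exact_mod_cast Nat.lt_of_lt_of_le Nat.zero_lt_one hn
  set m : ℝ := (n:ℝ) with hmdef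
  have h1K : (0:ℝ) < 1 + K*m := by positivity
  have hAb : (0:ℝ) < A + b*m := by positivity
  have h1b : (0:ℝ) < 1 + b*m := by positivity
  have hG1 : Real.Gamma (1 + K*(m+1)) = gratio K (1+K*m) * (Real.Gamma (1+K*m) * (1+K*m)^K) := by
    rw [show (1:ℝ) + K*(m+1) = (1+K*m) + K by ring, gratio, div_mul_cancel₀]
    exact (mul_pos (Real.Gamma_pos_of_pos h1K) (Real.rpow_pos_of_pos h1K K)).ne'
  have hG2 : Real.Gamma (A + b*(m+1)) = gratio b (A+b*m) * (Real.Gamma (A+b*m) * (A+b*m)^b) := by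
    rw [show A + b*(m+1) = (A+b*m) + b by ring, gratio, div_mul_cancel₀]
    exact (mul_pos (Real.Gamma_pos_of_pos hAb) (Real.rpow_pos_of_pos hAb b)).ne'
  have hG3 : Real.Gamma (1 + b*(m+1)) = gratio b (1+b*m) * (Real.Gamma (1+b*m) * (1+b*m)^b) := by
    rw [show (1:ℝ) + b*(m+1) = (1+b*m) + b by ring, gratio, div_mul_cancel₀]
    exact (mul_pos (Real.Gamma_pos_of_pos h1b) (Real.rpow_pos_of_pos h1b b)).ne'
  have hP : ((α+1):ℝ)^(-(b*(m+1))) = (α+1)^(-(b*m)) * (α+1)^(-b) := by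
    rw [← Real.rpow_add hα1']
    congr 1; ring
  have hmK : m^K = m^b * m^b * m := by
    rw [hK, Real.rpow_add hmpos, Real.rpow_add hmpos, Real.rpow_one]
  have hpw1 : (1+K*m)^K = m^b * m^b * m * (K+1/m)^K := by
    rw [show (1:ℝ)+K*m = m*(K+1/m) by field_simp; ring,
      Real.mul_rpow hmpos.le (by positivity), hmK]
  have hpw2 : (A+b*m)^b = m^b * (b+A/m)^b := by
    rw [show A+b*m = m*(b+A/m) by field_simp; ring,
      Real.mul_rpow hmpos.le (by positivity)]
  have hpw3 : (1+b*m)^b = m^b * (b+1/m)^b := by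
    rw [show (1:ℝ)+b*m = m*(b+1/m) by field_simp; ring,
      Real.mul_rpow hmpos.le (by positivity)]
  have hg1pos : 0 < gratio K (1+K*m) := gratio_pos h1K (by positivity)
  have hg2pos : 0 < gratio b (A+b*m) := gratio_pos hAb (by positivity)
  have hg3pos : 0 < gratio b (1+b*m) := gratio_pos h1b (by positivity)
  have hfac : ((n.factorial : ℝ)) ≠ 0 := by exact_mod_cast n.factorial_ne_zero
  have hmbne : m^b ≠ 0 := (Real.rpow_pos_of_pos hmpos b).ne'
  have hPne : ((α+1):ℝ)^(-(b*m)) ≠ 0 := (Real.rpow_pos_of_pos hα1' _).ne'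
  have hqne : ((α+1):ℝ)^(-b) ≠ 0 := (Real.rpow_pos_of_pos hα1' _).ne'
  symm
  rw [mgfCoef_eq hα1 (n+1), mgfCoef_eq hα1 n, Nat.factorial_succ]
  push_cast
  rw [← hb, ← hKdef, ← hA, ← hmdef]
  rw [hG1, hG2, hG3, hP, hpw1, hpw2, hpw3]
  have hΓ1 : Real.Gamma (1+K*m) ≠ 0 := (Real.Gamma_pos_of_pos h1K).ne'
  have hΓ2 : Real.Gamma (A+b*m) ≠ 0 := (Real.Gamma_pos_of_pos hAb).ne'
  have hΓ3 : Real.Gamma (1+b*m) ≠ 0 := (Real.Gamma_pos_of_pos h1b).ne'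
  have hx1 : ((K+1/m):ℝ)^K ≠ 0 := (Real.rpow_pos_of_pos (by positivity) K).ne'
  have hx2 : ((b+A/m):ℝ)^b ≠ 0 := (Real.rpow_pos_of_pos (by positivity) b).ne'
  have hx3 : ((b+1/m):ℝ)^b ≠ 0 := (Real.rpow_pos_of_pos (by positivity) b).ne'
  field_simp [hΓA.ne', hΓ1, hΓ2, hΓ3, hfac, hmbne, hPne, hqne, hx1, hx2, hx3,
    hg1pos.ne', hg2pos.ne', hg3pos.ne', hmpos.ne']

/-- The power series `Σ a_n x^n` has radius of convergence exactly
`c_α = (α-1)(α+1)^{α/(1-α)}`. -/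
theorem mgf_radius_of_convergence
    {α : ℝ} (hα1 : 1 < α) (hα2 : α < 2) :
    (∀ x : ℝ, |x| < (α-1)*(α+1)^(α/(1-α)) →
      Summable (fun n : ℕ => mgfCoef α n * x^n)) ∧
    (∀ x : ℝ, (α-1)*(α+1)^(α/(1-α)) < |x| →
      ¬ Summable (fun n : ℕ => mgfCoef α n * x^n)) := by
  have hc : (0:ℝ) < (α-1)*(α+1)^(α/(1-α)) :=
    mul_pos (by linarith) (Real.rpow_pos_of_pos (by linarith) _)
  set c : ℝ := (α-1)*(α+1)^(α/(1-α)) with hcdef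
  have hpos := mgfCoef_pos (α := α) hα1
  have hratio : ∀ x : ℝ, x ≠ 0 →
      Tendsto (fun n : ℕ => ‖mgfCoef α (n+1) * x^(n+1)‖ / ‖mgfCoef α n * x^n‖)
        atTop (𝓝 (c⁻¹ * |x|)) := by
    intro x hx
    have heq : (fun n : ℕ => ‖mgfCoef α (n+1) * x^(n+1)‖ / ‖mgfCoef α n * x^n‖)
        = fun n : ℕ => (mgfCoef α (n+1) / mgfCoef α n) * |x| := by
      funext n
      have hxn : |x|^n ≠ 0 := pow_ne_zero n (abs_ne_zero.2 hx)
      rw [Real.norm_eq_abs, Real.norm_eq_abs, abs_mul, abs_mul, abs_pow, abs_pow,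
        abs_of_pos (hpos (n+1)), abs_of_pos (hpos n), pow_succ]
      field_simp [(hpos n).ne']
    rw [heq]
    exact (mgf_ratio_tendsto hα1).mul_const |x|
  constructor
  · intro x hxlt
    by_cases hx : x = 0
    · subst hx
      refine summable_of_ne_finset_zero (s := {0}) ?_
      intro n hn
      simp only [Finset.mem_singleton] at hn
      simp [zero_pow hn]
    · refine summable_of_ratio_test_tendsto_lt_one ?_ ?_ (hratio x hx)
      · rw [inv_mul_eq_div]
        exact (div_lt_one hc).2 hxlt
      · exact Filter.Eventually.of_forall fun n =>
          mul_ne_zero (hpos n).ne' (pow_ne_zero n hx)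
  · intro x hxgt
    have hx : x ≠ 0 := by
      intro h; rw [h, abs_zero] at hxgt; linarith
    refine not_summable_of_ratio_test_tendsto_gt_one ?_ (hratio x hx)
    rw [inv_mul_eq_div]
    exact (one_lt_div hc).2 hxgt

end Main
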